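/- Consider the CTRS R over constants a, b and unary symbols f, g, with rules a → b, f(a) → b, and (g(x) → g(a) ⇐ f(x) → x) under the reachability semantics. Then the condition f(x) →* x is infeasible: there is no term t such that f(t) →*_R t. -/
import Mathlib


/-- Terms over the signature with constants `a`, `b` and unary symbols `f`, `g`. -/
inductive Tm where
  | a | b
  | f (t : Tm)
  | g (t : Tm)

mutual
  /-- The one-step rewrite relation of the CTRS with rules `a → b`, `f(a) → b` and
  `g(x) → g(a) ⇐ f(x) → x` under the reachability semantics: rule instances
  (whose conditions hold w.r.t. `Rews`) closed under contexts. -/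
  inductive Rew : Tm → Tm → Prop where
    | rule1 : Rew .a .b
    | rule2 : Rew (.f .a) .b
    | rule3 (x : Tm) : Rews (.f x) x → Rew (.g x) (.g .a)
    | f_congr {t t'} : Rew t t' → Rew (.f t) (.f t')
    | g_congr {t t'} : Rew t t' → Rew (.g t) (.g t')

  /-- The many-step rewrite relation: reflexive and closed under prepending
  one-step rewrites. -/
  inductive Rews : Tm → Tm → Prop where
    | refl (t : Tm) : Rews t t
    | step {s u t : Tm} : Rew s u → Rews u t → Rews s t
end

lemma b_normal : ∀ {u}, Rews Tm.b u → u = Tm.b := by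
  intro u h
  cases h with
  | refl => rfl
  | step h1 h2 => cases h1

lemma key : ∀ {v u}, Rews v u → ∀ s, v = Tm.f s →
    (∃ s', Rews s s' ∧ u = Tm.f s') ∨ (u = Tm.b ∧ Rews s Tm.a) := by
  intro v u h
  refine Rews.rec (motive_1 := fun _ _ _ => True)
    (motive_2 := fun v u _ => ∀ s, v = Tm.f s →
      (∃ s', Rews s s' ∧ u = Tm.f s') ∨ (u = Tm.b ∧ Rews s Tm.a))
    trivial trivial (fun _ _ _ => trivial) (fun _ _ => trivial) (fun _ _ => trivial)
    (fun t s hs => Or.inl ⟨s, Rews.refl s, hs⟩)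
    ?_ h
  intro v u' u h1 h2 _ ih s hs
  subst hs
  cases h1 with
  | rule2 =>
    right
    exact ⟨b_normal h2, Rews.refl _⟩
  | f_congr h =>
    rcases ih _ rfl with ⟨s', hss', rfl⟩ | ⟨rfl, ha⟩
    · exact Or.inl ⟨s', Rews.step h hss', rfl⟩
    · exact Or.inr ⟨rfl, Rews.step h ha⟩

/-- The condition `f(x) →* x` (of the conditional dependency pair
`G(x) → G(a) ⇐ f(x) → x`) is infeasible: no term `t` satisfies `f(t) →*_R t`. -/
theorem condition_infeasible : ¬ ∃ t : Tm, Rews (.f t) t := by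
  rintro ⟨t, h⟩
  induction t with
  | a => rcases key h _ rfl with ⟨s', _, h⟩ | ⟨h, _⟩ <;> cases h
  | b =>
    rcases key h _ rfl with ⟨s', _, h⟩ | ⟨_, ha⟩
    · cases h
    · cases b_normal ha
  | f t ih =>
    rcases key h _ rfl with ⟨s', hs, h⟩ | ⟨h, _⟩
    · cases h; exact ih hs
    · cases h
  | g t ih => rcases key h _ rfl with ⟨s', _, h⟩ | ⟨h, _⟩ <;> cases h
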